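/- Let H[u] = ∑_{r=1}^2 ∂/∂x_r((τ_{r1}u + τ_{r0}) ∂u/∂x_r) + τ₃₀ ∂²u/∂x₃² + ∑_{r=1}^2 ρ_{r0} ∂u/∂x_r. Then the 5-dimensional space W = Span{1, x₁, x₂, sin(√a₃₁ x₃), cos(√a₃₁ x₃)} (a₃₁ > 0) is invariant under H: for u = λ₁ + λ₂x₁ + λ₃x₂ + λ₄ sin(√a₃₁ x₃) + λ₅ cos(√a₃₁ x₃), H[u] = (τ₁₁λ₂² + ρ₁₀λ₂ + τ₂₁λ₃² + ρ₂₀λ₃) − τ₃₀ a₃₁ λ₄ sin(√a₃₁ x₃) − τ₃₀ a₃₁ λ₅ cos(√a₃₁ x₃) ∈ W. -/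
import Mathlib


/-- The quasilinear operator
`H[u] = ∑_{r=1,2} ∂/∂x_r((τ_{r1}u + τ_{r0})∂u/∂x_r) + τ₃₀ ∂²u/∂x₃²
        + ρ₁₀ ∂u/∂x₁ + ρ₂₀ ∂u/∂x₂`. -/
noncomputable def Hop3 (τ11 τ10 τ21 τ20 τ30 ρ10 ρ20 : ℝ)
    (u : ℝ → ℝ → ℝ → ℝ) (x1 x2 x3 : ℝ) : ℝ :=
  deriv (fun y => (τ11 * u y x2 x3 + τ10) * deriv (fun z => u z x2 x3) y) x1
  + deriv (fun y => (τ21 * u x1 y x3 + τ20) * deriv (fun z => u x1 z x3) y) x2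
  + τ30 * deriv (deriv (fun y => u x1 x2 y)) x3
  + ρ10 * deriv (fun y => u y x2 x3) x1
  + ρ20 * deriv (fun y => u x1 y x3) x2

private lemma deriv_affine (a b c : ℝ) :
    (deriv fun z : ℝ => a + b * z + c) = fun _ => b := by
  funext y
  have h : HasDerivAt (fun z : ℝ => a + b * z + c) (0 + b * 1 + 0) y :=
    (((hasDerivAt_const y a).add ((hasDerivAt_id y).const_mul b)).add
      (hasDerivAt_const y c))
  simpa using h.deriv

private lemma deriv_trig (c l4 l5 s : ℝ) :
    (deriv fun y : ℝ => c + l4 * Real.sin (s * y) + l5 * Real.cos (s * y))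
      = fun y => l4 * s * Real.cos (s * y) - l5 * s * Real.sin (s * y) := by
  funext y
  have hsy : HasDerivAt (fun y : ℝ => s * y) s y := by
    simpa using (hasDerivAt_id y).const_mul s
  have h : HasDerivAt (fun y : ℝ => c + l4 * Real.sin (s * y) + l5 * Real.cos (s * y))
      (0 + l4 * (Real.cos (s * y) * s) + l5 * (-Real.sin (s * y) * s)) y :=
    ((hasDerivAt_const y c).add
      (((Real.hasDerivAt_sin (s * y)).comp y hsy).const_mul l4)).add
      (((Real.hasDerivAt_cos (s * y)).comp y hsy).const_mul l5)
  rw [h.deriv]; ring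

theorem trig_poly_subspace_invariant
    (τ11 τ10 τ21 τ20 τ30 ρ10 ρ20 a31 l1 l2 l3 l4 l5 : ℝ) (ha31 : 0 < a31) :
    ∀ x1 x2 x3 : ℝ,
      Hop3 τ11 τ10 τ21 τ20 τ30 ρ10 ρ20
        (fun y1 y2 y3 => l1 + l2 * y1 + l3 * y2
          + l4 * Real.sin (Real.sqrt a31 * y3) + l5 * Real.cos (Real.sqrt a31 * y3)) x1 x2 x3
      = (τ11 * l2 ^ 2 + ρ10 * l2 + τ21 * l3 ^ 2 + ρ20 * l3)
        - τ30 * a31 * l4 * Real.sin (Real.sqrt a31 * x3)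
        - τ30 * a31 * l5 * Real.cos (Real.sqrt a31 * x3) := by
  intro x1 x2 x3
  set s := Real.sqrt a31 with hs
  have hs2 : s * s = a31 := Real.mul_self_sqrt ha31.le
  unfold Hop3
  have e1 : (deriv fun z : ℝ => l1 + l2 * z + l3 * x2 + l4 * Real.sin (s * x3)
      + l5 * Real.cos (s * x3)) = fun _ => l2 := by
    have := deriv_affine l1 l2 (l3 * x2 + l4 * Real.sin (s * x3) + l5 * Real.cos (s * x3))
    funext y
    rw [show (fun z : ℝ => l1 + l2 * z + l3 * x2 + l4 * Real.sin (s * x3)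
      + l5 * Real.cos (s * x3)) = fun z : ℝ => l1 + l2 * z + (l3 * x2
      + l4 * Real.sin (s * x3) + l5 * Real.cos (s * x3)) by funext z; ring]
    rw [this]
  have e2 : (deriv fun z : ℝ => l1 + l2 * x1 + l3 * z + l4 * Real.sin (s * x3)
      + l5 * Real.cos (s * x3)) = fun _ => l3 := by
    funext y
    rw [show (fun z : ℝ => l1 + l2 * x1 + l3 * z + l4 * Real.sin (s * x3)
      + l5 * Real.cos (s * x3)) = fun z : ℝ => (l1 + l2 * x1) + l3 * z
      + (l4 * Real.sin (s * x3) + l5 * Real.cos (s * x3)) by funext z; ring]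
    rw [deriv_affine]
  have e3 : (deriv fun y : ℝ => l1 + l2 * x1 + l3 * x2 + l4 * Real.sin (s * y)
      + l5 * Real.cos (s * y))
      = fun y => l4 * s * Real.cos (s * y) - l5 * s * Real.sin (s * y) := by
    rw [show (fun y : ℝ => l1 + l2 * x1 + l3 * x2 + l4 * Real.sin (s * y)
      + l5 * Real.cos (s * y)) = fun y : ℝ => (l1 + l2 * x1 + l3 * x2)
      + l4 * Real.sin (s * y) + l5 * Real.cos (s * y) by funext z; ring]
    exact deriv_trig _ _ _ _
  simp only [e1, e2, e3]
  have d1 : (deriv fun y : ℝ => (τ11 * (l1 + l2 * y + l3 * x2 + l4 * Real.sin (s * x3)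
      + l5 * Real.cos (s * x3)) + τ10) * l2) x1 = τ11 * l2 * l2 := by
    have h : HasDerivAt (fun y : ℝ => (τ11 * (l1 + l2 * y + l3 * x2 + l4 * Real.sin (s * x3)
        + l5 * Real.cos (s * x3)) + τ10) * l2) (τ11 * l2 * l2) x1 := by
      have hb : HasDerivAt (fun y : ℝ => l1 + l2 * y + l3 * x2 + l4 * Real.sin (s * x3)
          + l5 * Real.cos (s * x3)) l2 x1 := by
        have h0 : HasDerivAt (fun y : ℝ => l1 + l2 * y) (0 + l2 * 1) x1 :=
          (hasDerivAt_const x1 l1).add ((hasDerivAt_id x1).const_mul l2)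
        simpa using ((h0.add_const (l3 * x2)).add_const (l4 * Real.sin (s * x3))).add_const
          (l5 * Real.cos (s * x3))
      have := ((hb.const_mul τ11).add_const τ10).mul_const l2
      simpa [mul_comm, mul_assoc] using this
    exact h.deriv
  have d2 : (deriv fun y : ℝ => (τ21 * (l1 + l2 * x1 + l3 * y + l4 * Real.sin (s * x3)
      + l5 * Real.cos (s * x3)) + τ20) * l3) x2 = τ21 * l3 * l3 := by
    have h : HasDerivAt (fun y : ℝ => (τ21 * (l1 + l2 * x1 + l3 * y + l4 * Real.sin (s * x3)
        + l5 * Real.cos (s * x3)) + τ20) * l3) (τ21 * l3 * l3) x2 := by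
      have hb : HasDerivAt (fun y : ℝ => l1 + l2 * x1 + l3 * y + l4 * Real.sin (s * x3)
          + l5 * Real.cos (s * x3)) l3 x2 := by
        have h0 : HasDerivAt (fun y : ℝ => (l1 + l2 * x1) + l3 * y) (0 + l3 * 1) x2 :=
          (hasDerivAt_const x2 (l1 + l2 * x1)).add ((hasDerivAt_id x2).const_mul l3)
        have := (h0.add_const (l4 * Real.sin (s * x3))).add_const (l5 * Real.cos (s * x3))
        simpa [add_assoc] using this
      have := ((hb.const_mul τ21).add_const τ20).mul_const l3
      simpa [mul_comm, mul_assoc] using this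
    exact h.deriv
  have d3 : (deriv fun y : ℝ => l4 * s * Real.cos (s * y) - l5 * s * Real.sin (s * y)) x3
      = - (a31 * l4 * Real.sin (s * x3)) - a31 * l5 * Real.cos (s * x3) := by
    have hsy : HasDerivAt (fun y : ℝ => s * y) s x3 := by
      simpa using (hasDerivAt_id x3).const_mul s
    have h : HasDerivAt (fun y : ℝ => l4 * s * Real.cos (s * y) - l5 * s * Real.sin (s * y))
        (l4 * s * (-Real.sin (s * x3) * s) - l5 * s * (Real.cos (s * x3) * s)) x3 :=
      (((Real.hasDerivAt_cos (s * x3)).comp x3 hsy).const_mul (l4 * s)).sub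
        (((Real.hasDerivAt_sin (s * x3)).comp x3 hsy).const_mul (l5 * s))
    rw [h.deriv]
    rw [← hs2]; ring
  rw [d1, d2, d3]
  ring
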